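/- arXiv:2411.16435 — 3 statements merged into one kernel-verified Lean document; each statement's English description precedes it below -/
import Mathlib

section
/- Let η ∈ [0,1] and let k be an odd natural number with k·arcsin(η) ≤ π/2. Then |sin(k·arcsin(η))| ≥ η. Moreover, if additionally (k+2)·arcsin(η) > π/2, then sin(k·arcsin(η)) > sin(πk/(2(k+2))) ≥ 1/2. -/
open Real

/-- for `η ∈ [0,1]` and odd `k` with `k·arcsin η ≤ π/2` one has
`|sin(k·arcsin η)| ≥ η`; if moreover `(k+2)·arcsin η > π/2` then
`sin(k·arcsin η) > sin(πk/(2(k+2))) ≥ 1/2`. -/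
theorem amplitude_amplification_gain (η : ℝ) (hη : η ∈ Set.Icc (0:ℝ) 1)
    (k : ℕ) (hk : Odd k) (hle : (k : ℝ) * Real.arcsin η ≤ π / 2) :
    η ≤ |Real.sin ((k : ℝ) * Real.arcsin η)| ∧
    (((k : ℝ) + 2) * Real.arcsin η > π / 2 →
      Real.sin ((k : ℝ) * Real.arcsin η) > Real.sin (π * k / (2 * ((k : ℝ) + 2))) ∧
      Real.sin (π * k / (2 * ((k : ℝ) + 2))) ≥ 1 / 2) := by
  obtain ⟨hη0, hη1⟩ := hη
  have hk1 : 1 ≤ k := hk.pos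
  have hk1' : (1 : ℝ) ≤ (k : ℝ) := by exact_mod_cast hk1
  set θ := Real.arcsin η with hθ
  have hθ0 : 0 ≤ θ := Real.arcsin_nonneg.mpr hη0
  have hθπ : θ ≤ π / 2 := Real.arcsin_le_pi_div_two η
  have hkθ0 : 0 ≤ (k : ℝ) * θ := by positivity
  have hsinθ : Real.sin θ = η := Real.sin_arcsin (by linarith) hη1
  have hmem1 : θ ∈ Set.Icc (-(π/2)) (π/2) := ⟨by linarith, hθπ⟩
  have hmem2 : (k : ℝ) * θ ∈ Set.Icc (-(π/2)) (π/2) := ⟨by linarith, hle⟩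
  have hθle : θ ≤ (k : ℝ) * θ := by nlinarith
  have h1 : η ≤ Real.sin ((k : ℝ) * θ) := by
    rw [← hsinθ]
    exact Real.strictMonoOn_sin.monotoneOn hmem1 hmem2 hθle
  constructor
  · calc η ≤ Real.sin ((k : ℝ) * θ) := h1
      _ ≤ |Real.sin ((k : ℝ) * θ)| := le_abs_self _
  · intro hgt
    have hπ : 0 < π := Real.pi_pos
    have hk2 : (0 : ℝ) < (k : ℝ) + 2 := by linarith
    have hθgt : π / (2 * ((k : ℝ) + 2)) < θ := by
      rw [div_lt_iff₀ (by positivity)]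
      nlinarith
    have harg0 : 0 ≤ π * k / (2 * ((k : ℝ) + 2)) := by positivity
    have hargπ : π * k / (2 * ((k : ℝ) + 2)) ≤ π / 2 := by
      rw [div_le_div_iff₀ (by positivity) (by norm_num)]
      nlinarith
    have hmem3 : π * k / (2 * ((k : ℝ) + 2)) ∈ Set.Icc (-(π/2)) (π/2) :=
      ⟨by linarith, hargπ⟩
    have hlt : π * k / (2 * ((k : ℝ) + 2)) < (k : ℝ) * θ := by
      rw [div_lt_iff₀ (by positivity)]
      nlinarith
    constructor
    · exact Real.strictMonoOn_sin hmem3 hmem2 hlt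
    · have h6 : π / 6 ≤ π * k / (2 * ((k : ℝ) + 2)) := by
        rw [div_le_div_iff₀ (by norm_num) (by positivity)]
        nlinarith
      have hmem4 : π / 6 ∈ Set.Icc (-(π/2)) (π/2) := ⟨by linarith, by linarith⟩
      have := Real.strictMonoOn_sin.monotoneOn hmem4 hmem3 h6
      rw [Real.sin_pi_div_six] at this
      linarith
end

section
/- Let η, σ ∈ (0, 3/4] satisfy |σ − η| ≤ η/(4π+1) and σ ≤ π/6. Let k be an odd positive integer with k·σ ≤ π/2, and set ĝ(x) = sin(k·arcsin(x)). If additionally ĝ(σ) > 1/2, then |ĝ(σ) − ĝ(η)| ≤ 1/4, and hence ĝ(η) > 1/4. -/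
open Real

lemma arcsin_lip_aux : ∀ x ∈ Set.Icc (0:ℝ) (3/4),
    ‖1 / Real.sqrt (1 - x^2)‖ ≤ 2 := by
  intro x hx
  obtain ⟨h0, h1⟩ := hx
  have hs : (1:ℝ)/2 ≤ Real.sqrt (1 - x^2) := by
    rw [show (1:ℝ)/2 = Real.sqrt (1/4) by
      rw [show (1:ℝ)/4 = (1/2)^2 by norm_num, Real.sqrt_sq]; norm_num]
    apply Real.sqrt_le_sqrt; nlinarith
  have hspos : 0 < Real.sqrt (1 - x^2) := by linarith
  rw [Real.norm_eq_abs, abs_of_nonneg (by positivity), div_le_iff₀ (by positivity)]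
  linarith

lemma arcsin_lip {a b : ℝ} (ha : 0 ≤ a) (hab : a ≤ b) (hb : b ≤ 3/4) :
    |Real.arcsin b - Real.arcsin a| ≤ 2 * (b - a) := by
  have key := (convex_Icc (0:ℝ) (3/4)).norm_image_sub_le_of_norm_hasDerivWithin_le
    (f := Real.arcsin) (f' := fun x => 1 / Real.sqrt (1 - x^2)) (C := 2)
    (fun x hx => by
      have h1 : x ≠ -1 := by intro h; subst h; exact absurd hx.1 (by norm_num)
      have h2 : x ≠ 1 := by intro h; subst h; exact absurd hx.2 (by norm_num)
      exact (Real.hasDerivAt_arcsin h1 h2).hasDerivWithinAt)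
    arcsin_lip_aux ⟨ha, by linarith⟩ ⟨by linarith, hb⟩
  rw [Real.norm_eq_abs, Real.norm_eq_abs] at key
  calc |Real.arcsin b - Real.arcsin a| ≤ 2 * |b - a| := key
    _ = 2 * (b - a) := by rw [abs_of_nonneg (by linarith)]

lemma sin_sub_sin_abs_le (a b : ℝ) : |Real.sin a - Real.sin b| ≤ |a - b| := by
  rw [Real.sin_sub_sin, abs_mul, abs_mul]
  have h1 : |Real.sin ((a - b) / 2)| ≤ |(a - b) / 2| := Real.abs_sin_le_abs
  have h2 : |Real.cos ((a + b) / 2)| ≤ 1 := Real.abs_cos_le_one _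
  have h3 : |(a - b) / 2| = |a - b| / 2 := by rw [abs_div]; norm_num
  have h4 := mul_le_mul h1 h2 (abs_nonneg _) (abs_nonneg _)
  rw [show |(2:ℝ)| = 2 by norm_num]
  nlinarith [abs_nonneg (Real.cos ((a + b) / 2))]

/-- error propagation through amplitude amplification. If
`|σ − η| ≤ η/(4π+1)`, `σ ≤ π/6`, `k` is odd and positive with `kσ ≤ π/2`, and
`ĝ(σ) = sin(k arcsin σ) > 1/2`, then `|ĝ(σ) − ĝ(η)| ≤ 1/4` and `ĝ(η) > 1/4`. -/
theorem amplified_efficiency_lower_bound (η σ : ℝ)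
    (hη : η ∈ Set.Ioc (0:ℝ) (3/4)) (hσ : σ ∈ Set.Ioc (0:ℝ) (3/4))
    (hest : |σ - η| ≤ η / (4 * π + 1)) (hσπ : σ ≤ π / 6)
    (k : ℕ) (hk : Odd k) (hk0 : 0 < k) (hkσ : (k : ℝ) * σ ≤ π / 2)
    (hghalf : Real.sin ((k : ℝ) * Real.arcsin σ) > 1 / 2) :
    |Real.sin ((k : ℝ) * Real.arcsin σ) - Real.sin ((k : ℝ) * Real.arcsin η)| ≤ 1 / 4 ∧
    Real.sin ((k : ℝ) * Real.arcsin η) > 1 / 4 := by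
  have hπ : (0:ℝ) < π := Real.pi_pos
  have hk1 : (1:ℝ) ≤ (k:ℝ) := by exact_mod_cast hk0
  -- arcsin difference bound
  have harc : |Real.arcsin σ - Real.arcsin η| ≤ 2 * |σ - η| := by
    rcases le_total σ η with h | h
    · have t := arcsin_lip hσ.1.le h hη.2
      rw [abs_sub_comm] at t
      calc |Real.arcsin σ - Real.arcsin η| ≤ 2 * (η - σ) := t
        _ = 2 * |σ - η| := by rw [abs_sub_comm, abs_of_nonneg (by linarith)]
    · have t := arcsin_lip hη.1.le h hσ.2
      calc |Real.arcsin σ - Real.arcsin η| ≤ 2 * (σ - η) := t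
        _ = 2 * |σ - η| := by rw [abs_of_nonneg (by linarith)]
  -- η/(4π+1) ≤ σ/(4π)
  have hησ : η / (4 * π + 1) ≤ σ / (4 * π) := by
    have h1 : η - σ ≤ |σ - η| := by rw [abs_sub_comm]; exact le_abs_self _
    have h2 : η - σ ≤ η / (4 * π + 1) := le_trans h1 hest
    rw [le_div_iff₀ (by positivity)] at h2
    rw [div_le_div_iff₀ (by positivity) (by positivity)]; nlinarith
  have key : (k:ℝ) * |Real.arcsin σ - Real.arcsin η| ≤ 1 / 4 := by
    have c1 : (k:ℝ) * |Real.arcsin σ - Real.arcsin η| ≤ (k:ℝ) * (2 * (η / (4 * π + 1))) := by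
      apply mul_le_mul_of_nonneg_left _ (by positivity)
      calc |Real.arcsin σ - Real.arcsin η| ≤ 2 * |σ - η| := harc
        _ ≤ 2 * (η / (4 * π + 1)) := by linarith
    have c2 : (k:ℝ) * (2 * (η / (4 * π + 1))) ≤ (k:ℝ) * (2 * (σ / (4 * π))) :=
      mul_le_mul_of_nonneg_left (by linarith) (by positivity)
    have c3 : (k:ℝ) * (2 * (σ / (4 * π))) ≤ 1/4 := by
      have heq : (k:ℝ) * (2 * (σ / (4 * π))) = ((k:ℝ) * σ) / (2 * π) := by
        field_simp; ring
      rw [heq, div_le_iff₀ (by positivity)]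
      nlinarith
    linarith
  have hsin : |Real.sin ((k : ℝ) * Real.arcsin σ) - Real.sin ((k : ℝ) * Real.arcsin η)| ≤ 1/4 := by
    calc |Real.sin ((k : ℝ) * Real.arcsin σ) - Real.sin ((k : ℝ) * Real.arcsin η)|
        ≤ |(k : ℝ) * Real.arcsin σ - (k : ℝ) * Real.arcsin η| := sin_sub_sin_abs_le _ _
      _ = (k:ℝ) * |Real.arcsin σ - Real.arcsin η| := by
          rw [← mul_sub, abs_mul, abs_of_nonneg (by positivity : (0:ℝ) ≤ (k:ℝ))]
      _ ≤ 1/4 := key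
  refine ⟨hsin, ?_⟩
  have := abs_sub_abs_le_abs_sub (Real.sin ((k : ℝ) * Real.arcsin σ)) (Real.sin ((k : ℝ) * Real.arcsin η))
  have h := (abs_le.mp hsin).2
  linarith [sub_le_iff_le_add.mp h]
end

section
/- Let γ > 0, σ, η, σ̂, η̂ ∈ (0,1] with σ̂ ≥ 1/2, and suppose |σ − η| ≤ min{ε·η/(2π+1), η/(4π+1)} for some ε ∈ (0,1], |σ̂ − η̂| ≤ π·σ^{−1}·|σ − η|, and η ≤ ((4π+1)/(4π))·σ. Set x_norm = γ·η (interpreted as |x|), γ̂ = γ·η/η̂ and γ̂_σ = γ·σ/σ̂. Then |γ̂_σ − γ̂|·η̂ ≤ ε·x_norm. -/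
open Real

/-- the final normalization-error estimate. With `|x| = γη`,
`γ̂ = γη/η̂` and `γ̂_σ = γσ/σ̂`, the hypotheses imply `|γ̂_σ − γ̂|·η̂ ≤ ε·|x|`. -/
theorem normalization_error_bound (γ σ η σhat ηhat ε : ℝ)
    (hγ : 0 < γ)
    (hσ : σ ∈ Set.Ioc (0:ℝ) 1) (hη : η ∈ Set.Ioc (0:ℝ) 1)
    (hσhat : σhat ∈ Set.Ioc (0:ℝ) 1) (hηhat : ηhat ∈ Set.Ioc (0:ℝ) 1)
    (hσhalf : 1 / 2 ≤ σhat)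
    (hε : ε ∈ Set.Ioc (0:ℝ) 1)
    (hest : |σ - η| ≤ min (ε * η / (2 * π + 1)) (η / (4 * π + 1)))
    (hhat : |σhat - ηhat| ≤ π * σ⁻¹ * |σ - η|)
    (hησ : η ≤ (4 * π + 1) / (4 * π) * σ) :
    |γ * σ / σhat - γ * η / ηhat| * ηhat ≤ ε * (γ * η) := by
  obtain ⟨hσ0, hσ1⟩ := hσ
  obtain ⟨hη0, hη1⟩ := hη
  obtain ⟨hσh0, hσh1⟩ := hσhat
  obtain ⟨hηh0, hηh1⟩ := hηhat
  obtain ⟨hε0, hε1⟩ := hε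
  have hπ := Real.pi_pos
  set a := |σ - η| with ha
  have ha0 : 0 ≤ a := abs_nonneg _
  -- rewrite LHS
  have h1 : γ * σ / σhat - γ * η / ηhat = γ * (σ * ηhat - η * σhat) / (σhat * ηhat) := by
    field_simp
  have h2 : |γ * σ / σhat - γ * η / ηhat| * ηhat = γ * |σ * ηhat - η * σhat| / σhat := by
    rw [h1, abs_div, abs_mul, abs_of_pos hγ, abs_of_pos (mul_pos hσh0 hηh0)]
    field_simp
  rw [h2]
  -- numerator bound
  have hnum : |σ * ηhat - η * σhat| ≤ π * a + σhat * a := by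
    have hd : σ * ηhat - η * σhat = σ * (ηhat - σhat) + σhat * (σ - η) := by ring
    calc |σ * ηhat - η * σhat| ≤ |σ * (ηhat - σhat)| + |σhat * (σ - η)| := by
          rw [hd]; exact abs_add_le _ _
      _ = σ * |σhat - ηhat| + σhat * a := by
          rw [abs_mul, abs_mul, abs_of_pos hσ0, abs_of_pos hσh0, abs_sub_comm]
      _ ≤ σ * (π * σ⁻¹ * a) + σhat * a := by
          have := mul_le_mul_of_nonneg_left hhat hσ0.le
          linarith
      _ = π * a + σhat * a := by
          field_simp
  have hσhi : (1:ℝ) / σhat ≤ 2 := by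
    rw [div_le_iff₀ hσh0]; linarith
  have haε : a ≤ ε * η / (2 * π + 1) := le_trans hest (min_le_left _ _)
  calc γ * |σ * ηhat - η * σhat| / σhat
      ≤ γ * (π * a + σhat * a) / σhat := by gcongr
    _ ≤ γ * ((2 * π + 1) * a) := by
        rw [div_le_iff₀ hσh0]
        nlinarith [mul_le_mul_of_nonneg_left (show (1:ℝ) ≤ 2*σhat by linarith) (mul_nonneg (mul_nonneg hγ.le hπ.le) ha0)]
    _ ≤ γ * ((2 * π + 1) * (ε * η / (2 * π + 1))) := by
        apply mul_le_mul_of_nonneg_left _ hγ.le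
        exact mul_le_mul_of_nonneg_left haε (by linarith)
    _ = ε * (γ * η) := by field_simp
end
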